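/- For all complex numbers s, t, u with u² = s⁵t - 5s⁴t² - 8s³t³ + 8s²t⁴ + 5st⁵ - 4t⁶, the point (x₀, x₁, x₂, x₃, x₄) = (s³, s²t, st², t³, u) satisfies both defining equations of the surface X₆, namely x₀x₁ - 5x₁² - 9x₁x₂ + 8x₂² + x₀x₃ + 5x₂x₃ - 4x₃² - x₄² = 0 and x₀²x₁ - 1204x₀x₂x₃ - 1291x₀x₃² + 1721x₁x₃² + 853x₂x₃² - 788x₃³ + x₁x₂x₄ - x₀x₃x₄ - x₀x₄² - 5x₁x₄² - 33x₂x₄² - 197x₃x₄² = 0. (The image of the genus-2 hyperelliptic curve under the map (x : y : z) ↦ (x³ : x²y : xy² : y³ : z) lies on X₆.) -/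
import Mathlib


/-- The image of the genus-2 hyperelliptic curve under
`(x : y : z) ↦ (x³ : x²y : xy² : y³ : z)` lies on the K3 surface `X₆`. -/
theorem hyperelliptic_image_lies_on_X6 (s t u : ℂ)
    (h : u ^ 2 = s ^ 5 * t - 5 * s ^ 4 * t ^ 2 - 8 * s ^ 3 * t ^ 3
      + 8 * s ^ 2 * t ^ 4 + 5 * s * t ^ 5 - 4 * t ^ 6) :
    (s ^ 3) * (s ^ 2 * t) - 5 * (s ^ 2 * t) ^ 2 - 9 * (s ^ 2 * t) * (s * t ^ 2)
        + 8 * (s * t ^ 2) ^ 2 + (s ^ 3) * (t ^ 3) + 5 * (s * t ^ 2) * (t ^ 3)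
        - 4 * (t ^ 3) ^ 2 - u ^ 2 = 0 ∧
    (s ^ 3) ^ 2 * (s ^ 2 * t) - 1204 * (s ^ 3) * (s * t ^ 2) * (t ^ 3)
        - 1291 * (s ^ 3) * (t ^ 3) ^ 2 + 1721 * (s ^ 2 * t) * (t ^ 3) ^ 2
        + 853 * (s * t ^ 2) * (t ^ 3) ^ 2 - 788 * (t ^ 3) ^ 3
        + (s ^ 2 * t) * (s * t ^ 2) * u - (s ^ 3) * (t ^ 3) * u
        - (s ^ 3) * u ^ 2 - 5 * (s ^ 2 * t) * u ^ 2 - 33 * (s * t ^ 2) * u ^ 2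
        - 197 * (t ^ 3) * u ^ 2 = 0 := by
  constructor <;> · rw [h]; ring
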